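/- Let D(Ā) = (X, E) be the state digraph of a structural pattern Ā and let M* be a maximum matching of the bipartite graph B(X, X, E) whose set of right-unmatched vertices is nonempty. Then the edges of M* (viewed as edges of D(Ā)), together with the vertices of X isolated by M*, constitute a spanning subgraph of D(Ā) that is a vertex-disjoint union of directed cycles and state stems, where the roots of the state stems are exactly the right-unmatched vertices of M*. -/

import Mathlib

/-- A real matrix `A` realizes the Boolean structural pattern `P` if `A` vanishes
wherever `P` is zero (`false`). -/
def Realizes {m k : ℕ} (A : Matrix (Fin m) (Fin k) ℝ) (P : Matrix (Fin m) (Fin k) Bool) : Prop :=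
  ∀ i j, P i j = false → A i j = 0

/-- The controllability matrix `[B, AB, …, A^{n-1}B]`. -/
def ctrbMatrix {n p : ℕ} (A : Matrix (Fin n) (Fin n) ℝ) (B : Matrix (Fin n) (Fin p) ℝ) :
    Matrix (Fin n) (Fin n × Fin p) ℝ :=
  Matrix.of fun i jk => (A ^ (jk.1 : ℕ) * B) i jk.2

/-- Structural controllability of a pair of patterns `(Ā, B̄)`: some realization
has full-rank controllability matrix. -/
def StructurallyControllable {n p : ℕ} (Ab : Matrix (Fin n) (Fin n) Bool)
    (Bb : Matrix (Fin n) (Fin p) Bool) : Prop :=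
  ∃ (A : Matrix (Fin n) (Fin n) ℝ) (B : Matrix (Fin n) (Fin p) ℝ),
    Realizes A Ab ∧ Realizes B Bb ∧ (ctrbMatrix A B).rank = n

/-- A dedicated input pattern: every column has exactly one nonzero entry. -/
def Dedicated {n p : ℕ} (Bb : Matrix (Fin n) (Fin p) Bool) : Prop :=
  ∀ j, ∃! i, Bb i j = true

/-- Edge `x_j → x_i` of the state digraph `D(Ā)` (present iff `Ā_{ij} ≠ 0`). -/
def stateEdge {n : ℕ} (Ab : Matrix (Fin n) (Fin n) Bool) (j i : Fin n) : Prop :=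
  Ab i j = true

/-- Edge set of the bipartite graph `B(X, X, E)` associated with `D(Ā)`:
`(j, i)` is an edge from left `x_j` to right `x_i` iff `x_j → x_i` in `D(Ā)`. -/
def stateEdgeFinset {n : ℕ} (Ab : Matrix (Fin n) (Fin n) Bool) : Finset (Fin n × Fin n) :=
  Finset.univ.filter fun e => Ab e.2 e.1 = true

/-- A matching of a bipartite graph with edge set `E`: a subset of `E` in which
no two edges share a left endpoint or share a right endpoint. -/
def IsMatching {α β : Type*} (E M : Finset (α × β)) : Prop :=
  M ⊆ E ∧ (∀ e ∈ M, ∀ f ∈ M, e.1 = f.1 → e = f) ∧ ∀ e ∈ M, ∀ f ∈ M, e.2 = f.2 → e = f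

/-- A maximum matching: a matching of maximum cardinality. -/
def IsMaxMatching {α β : Type*} (E M : Finset (α × β)) : Prop :=
  IsMatching E M ∧ ∀ M', IsMatching E M' → M'.card ≤ M.card

/-- `v` is a right-unmatched vertex with respect to the matching `M`. -/
def RightUnmatched {α β : Type*} (M : Finset (α × β)) (v : β) : Prop :=
  ∀ e ∈ M, e.2 ≠ v

/-- The set of right-unmatched vertices of `M`. -/
def unmatchedSet {α β : Type*} (M : Finset (α × β)) : Set β :=
  {v | RightUnmatched M v}

/-- The tip (last vertex) of the path `r :: l`. -/
def stemTip {V : Type*} (r : V) (l : List V) : V :=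
  (r :: l).getLast (List.cons_ne_nil r l)

/-- `r :: l` is a state stem: a simple directed path (possibly a single vertex)
with root `r` and tip `stemTip r l`. -/
def IsStem {V : Type*} (edge : V → V → Prop) (r : V) (l : List V) : Prop :=
  (r :: l).Nodup ∧ List.Chain edge r l

/-- `r :: l` is a simple directed cycle (a self-loop when `l = []`). -/
def IsCycle {V : Type*} (edge : V → V → Prop) (r : V) (l : List V) : Prop :=
  IsStem edge r l ∧ edge (stemTip r l) r

/-- The (directed) edges of the stem `r :: l`. -/
def stemEdges {V : Type*} (r : V) (l : List V) : List (V × V) :=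
  (r :: l).zip l

/-- The (directed) edges of the cycle `r :: l`, including the closing edge. -/
def cycleEdges {V : Type*} (r : V) (l : List V) : List (V × V) :=
  (r :: l).zip (l ++ [r])

/-- The vertices of a stem/cycle encoded as a pair (root, remaining vertices). -/
def pieceVerts {V : Type*} (s : V × List V) : List V :=
  s.1 :: s.2

/-- Reachability (by a directed path) in a digraph. -/
def Reach {V : Type*} (edge : V → V → Prop) : V → V → Prop :=
  Relation.ReflTransGen edge

/-- `S` is a strongly connected component: a nonempty set of mutually reachable
vertices that is maximal with this property. -/
def IsSCC {V : Type*} (edge : V → V → Prop) (S : Set V) : Prop :=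
  S.Nonempty ∧ (∀ v ∈ S, ∀ w ∈ S, Reach edge v w) ∧
    ∀ v ∈ S, ∀ w, Reach edge v w → Reach edge w v → w ∈ S

/-- A non-top-linked SCC: an SCC with no edge entering it from outside. -/
def IsNonTopLinkedSCC {V : Type*} (edge : V → V → Prop) (S : Set V) : Prop :=
  IsSCC edge S ∧ ∀ a b, edge a b → b ∈ S → a ∈ S

/-- `β`: the number of non-top-linked SCCs of `D(Ā)`. -/
noncomputable def numNonTopSCC {n : ℕ} (Ab : Matrix (Fin n) (Fin n) Bool) : ℕ :=
  Set.ncard {S : Set (Fin n) | IsNonTopLinkedSCC (stateEdge Ab) S}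

/-- The number of non-top-linked SCCs of `D(Ā)` that are top assignable w.r.t. `M`,
i.e. contain a right-unmatched vertex of `M`. -/
noncomputable def assignIdx {n : ℕ} (Ab : Matrix (Fin n) (Fin n) Bool) (M : Finset (Fin n × Fin n)) : ℕ :=
  Set.ncard {S : Set (Fin n) | IsNonTopLinkedSCC (stateEdge Ab) S ∧ ∃ v ∈ S, RightUnmatched M v}

/-- `α`: the maximum assignability index, the maximum over all maximum matchings of
the number of top assignable non-top-linked SCCs. -/
noncomputable def maxAssignIdx {n : ℕ} (Ab : Matrix (Fin n) (Fin n) Bool) : ℕ :=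
  sSup {k | ∃ M, IsMaxMatching (stateEdgeFinset Ab) M ∧ assignIdx Ab M = k}

/-- The minimum number of dedicated inputs rendering the pattern structurally controllable. -/
noncomputable def minDedicatedInputs {n : ℕ} (Ab : Matrix (Fin n) (Fin n) Bool) : ℕ :=
  sInf {p : ℕ | ∃ Bb : Matrix (Fin n) (Fin p) Bool, Dedicated Bb ∧ StructurallyControllable Ab Bb}


namespace MMD

attribute [local instance] Classical.propDecidable

variable {n : ℕ}

noncomputable def mnext (M : Finset (Fin n × Fin n)) (j : Fin n) : Option (Fin n) :=
  if h : ∃ i, (j, i) ∈ M then some h.choose else none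

noncomputable def mprev (M : Finset (Fin n × Fin n)) (i : Fin n) : Option (Fin n) :=
  if h : ∃ j, (j, i) ∈ M then some h.choose else none

lemma mnext_mem {M : Finset (Fin n × Fin n)} {j i : Fin n} (h : mnext M j = some i) :
    (j, i) ∈ M := by
  unfold mnext at h
  split_ifs at h with hex
  · obtain rfl := Option.some.inj h
    exact hex.choose_spec

lemma mem_mnext {M : Finset (Fin n × Fin n)}
    (hL : ∀ e ∈ M, ∀ f ∈ M, e.1 = f.1 → e = f) {j i : Fin n} (h : (j, i) ∈ M) :
    mnext M j = some i := by
  have hex : ∃ i, (j, i) ∈ M := ⟨i, h⟩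
  have := hL _ hex.choose_spec _ h rfl
  simp only [mnext, dif_pos hex]
  exact congrArg some (congrArg Prod.snd this)

lemma mprev_mem {M : Finset (Fin n × Fin n)} {j i : Fin n} (h : mprev M i = some j) :
    (j, i) ∈ M := by
  unfold mprev at h
  split_ifs at h with hex
  · obtain rfl := Option.some.inj h
    exact hex.choose_spec

noncomputable def iterN (M : Finset (Fin n × Fin n)) : ℕ → Fin n → Option (Fin n)
  | 0, v => some v
  | k+1, v => (iterN M k v).bind (mnext M)

noncomputable def piterN (M : Finset (Fin n × Fin n)) : ℕ → Fin n → Option (Fin n)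
  | 0, v => some v
  | k+1, v => (piterN M k v).bind (mprev M)

lemma iterN_one (M : Finset (Fin n × Fin n)) (v : Fin n) : iterN M 1 v = mnext M v := by
  simp [iterN]

lemma iterN_succ_left (M : Finset (Fin n × Fin n)) (k : ℕ) (v : Fin n) :
    iterN M (k+1) v = (mnext M v).bind (iterN M k) := by
  induction k generalizing v with
  | zero => cases h : mnext M v <;> simp [iterN, h]
  | succ k ih =>
    show (iterN M (k+1) v).bind (mnext M) = _
    rw [ih]
    cases h : mnext M v <;> simp [iterN]

lemma iterN_add (M : Finset (Fin n × Fin n)) (a b : ℕ) (v : Fin n) :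
    iterN M (a + b) v = (iterN M a v).bind (iterN M b) := by
  induction b with
  | zero => cases h : iterN M a v <;> simp [iterN, h]
  | succ b ih =>
    show iterN M ((a + b) + 1) v = _
    rw [show iterN M ((a+b)+1) v = (iterN M (a+b) v).bind (mnext M) from rfl, ih]
    cases h : iterN M a v <;> simp [iterN]

lemma iterN_some_of_le (M : Finset (Fin n × Fin n)) {a b : ℕ} (hab : a ≤ b) {v w : Fin n}
    (h : iterN M b v = some w) : ∃ u, iterN M a v = some u := by
  obtain ⟨c, rfl⟩ := Nat.exists_eq_add_of_le hab
  rw [iterN_add] at h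
  cases ha : iterN M a v with
  | none => rw [ha] at h; simp at h
  | some u => exact ⟨u, rfl⟩

lemma iterN_inj {M : Finset (Fin n × Fin n)}
    (hR : ∀ e ∈ M, ∀ f ∈ M, e.2 = f.2 → e = f) {a : ℕ} :
    ∀ {u v w : Fin n}, iterN M a u = some w → iterN M a v = some w → u = v := by
  induction a with
  | zero => intro u v w hu hv; cases hu; cases hv; rfl
  | succ a ih =>
    intro u v w hu hv
    simp only [iterN] at hu hv
    cases h1 : iterN M a u with
    | none => rw [h1] at hu; simp at hu
    | some x =>
      cases h2 : iterN M a v with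
      | none => rw [h2] at hv; simp at hv
      | some y =>
        rw [h1] at hu; rw [h2] at hv
        simp only [Option.bind_some] at hu hv
        have hx := mnext_mem hu
        have hy := mnext_mem hv
        have : x = y := congrArg Prod.fst (hR _ hx _ hy rfl)
        subst this
        exact ih h1 h2

lemma no_pred {M : Finset (Fin n × Fin n)} {r : Fin n} (hr : RightUnmatched M r)
    {v : Fin n} {m : ℕ} (hm : 0 < m) : iterN M m v ≠ some r := by
  obtain ⟨k, rfl⟩ := Nat.exists_eq_add_of_lt hm
  intro h
  rw [show 0 + k + 1 = k + 1 by omega] at h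
  simp only [iterN] at h
  cases h1 : iterN M k v with
  | none => rw [h1] at h; simp at h
  | some x =>
    rw [h1] at h
    simp only [Option.bind_some] at h
    exact hr _ (mnext_mem h) rfl

lemma no_repeat {M : Finset (Fin n × Fin n)}
    (hR : ∀ e ∈ M, ∀ f ∈ M, e.2 = f.2 → e = f)
    {r : Fin n} (hr : RightUnmatched M r) {a b : ℕ} (hab : a < b) {w : Fin n}
    (ha : iterN M a r = some w) : iterN M b r ≠ some w := by
  intro hb
  obtain ⟨u, hu⟩ := iterN_some_of_le M (Nat.sub_le b a) hb
  have h2 : iterN M ((b - a) + a) r = some w := by rwa [show (b-a)+a = b by omega]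
  rw [iterN_add, hu, Option.bind_some] at h2
  have : u = r := iterN_inj hR h2 ha
  subst this
  exact no_pred hr (by omega) hu

noncomputable def trail (M : Finset (Fin n × Fin n)) : ℕ → Fin n → List (Fin n)
  | 0, _ => []
  | k+1, v =>
    match mnext M v with
    | none => []
    | some w => w :: trail M k w

lemma trail_succ (M : Finset (Fin n × Fin n)) (k : ℕ) (v : Fin n) :
    trail M (k+1) v = match mnext M v with
    | none => []
    | some w => w :: trail M k w := rfl

lemma trail_length_le (M : Finset (Fin n × Fin n)) (k : ℕ) (v : Fin n) :
    (trail M k v).length ≤ k := by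
  induction k generalizing v with
  | zero => simp [trail]
  | succ k ih =>
    rw [trail_succ]
    cases h : mnext M v with
    | none => simp
    | some w => simpa using ih w

lemma trail_get? (M : Finset (Fin n × Fin n)) (k : ℕ) (v : Fin n) :
    ∀ a < k, (trail M k v)[a]? = iterN M (a+1) v := by
  induction k generalizing v with
  | zero => omega
  | succ k ih =>
    intro a ha
    cases hv : mnext M v with
    | none =>
      simp only [trail_succ, hv, List.getElem?_nil, iterN_succ_left, Option.bind_none]
    | some w =>
      simp only [trail_succ, hv]
      cases a with
      | zero => simp [iterN_one, hv]
      | succ a =>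
        rw [List.getElem?_cons_succ, iterN_succ_left, hv, Option.bind_some]
        exact ih w a (by omega)

lemma cons_trail_get? (M : Finset (Fin n × Fin n)) (k : ℕ) (v : Fin n) :
    ∀ a ≤ k, (v :: trail M k v)[a]? = iterN M a v := by
  intro a ha
  cases a with
  | zero => simp [iterN]
  | succ a =>
    rw [List.getElem?_cons_succ]
    exact trail_get? M k v a (by omega)

lemma mem_cons_trail {M : Finset (Fin n × Fin n)} {w v : Fin n} {k : ℕ} :
    w ∈ v :: trail M k v ↔ ∃ a ≤ k, iterN M a v = some w := by
  constructor
  · intro h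
    obtain ⟨a, ha, hget⟩ := List.mem_iff_getElem.mp h
    simp only [List.length_cons] at ha
    have hak : a ≤ k := by have := trail_length_le M k v; omega
    refine ⟨a, hak, ?_⟩
    rw [← cons_trail_get? M k v a hak, List.getElem?_eq_getElem (by simpa using ha), hget]
  · rintro ⟨a, ha, hiter⟩
    have := cons_trail_get? M k v a ha
    rw [hiter] at this
    exact List.mem_of_getElem? this

lemma mem_trail_of_iter {M : Finset (Fin n × Fin n)} {m k : ℕ} (hm : 0 < m) (hmk : m ≤ k)
    {v w : Fin n} (h : iterN M m v = some w) : w ∈ trail M k v := by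
  have := trail_get? M k v (m-1) (by omega)
  rw [show m - 1 + 1 = m by omega, h] at this
  exact List.mem_of_getElem? this

lemma trail_chain (M : Finset (Fin n × Fin n)) (k : ℕ) (v : Fin n) :
    List.Chain (fun a b => (a, b) ∈ M) v (trail M k v) := by
  induction k generalizing v with
  | zero => simp [trail]; exact List.Chain.nil
  | succ k ih =>
    rw [trail_succ]
    cases hv : mnext M v with
    | none => simp; exact List.Chain.nil
    | some w => exact List.Chain.cons (mnext_mem hv) (ih w)

lemma stem_nodup {M : Finset (Fin n × Fin n)}
    (hR : ∀ e ∈ M, ∀ f ∈ M, e.2 = f.2 → e = f)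
    {r : Fin n} (hr : RightUnmatched M r) (k : ℕ) : (r :: trail M k r).Nodup := by
  rw [List.nodup_iff_injective_get]
  rintro ⟨a, ha⟩ ⟨b, hb⟩ heq
  simp only [List.get_eq_getElem] at heq
  simp only [List.length_cons] at ha hb
  have hlen := trail_length_le M k r
  have h1 : iterN M a r = some ((r :: trail M k r)[a]) := by
    rw [← cons_trail_get? M k r a (by omega), List.getElem?_eq_getElem (by simpa using ha)]
  have h2 : iterN M b r = some ((r :: trail M k r)[b]) := by
    rw [← cons_trail_get? M k r b (by omega), List.getElem?_eq_getElem (by simpa using hb)]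
  rw [heq] at h1
  rcases lt_trichotomy a b with h | h | h
  · exact absurd h2 (no_repeat hR hr h h1)
  · exact Fin.ext h
  · exact absurd h1 (no_repeat hR hr h h2)

end MMD

namespace MMD

attribute [local instance] Classical.propDecidable

variable {n : ℕ}

def onCyc (M : Finset (Fin n × Fin n)) (v : Fin n) : Prop :=
  ∃ m, 0 < m ∧ iterN M m v = some v

noncomputable def per (M : Finset (Fin n × Fin n)) (v : Fin n) : ℕ :=
  if h : onCyc M v then Nat.find h else 1

lemma per_pos (M : Finset (Fin n × Fin n)) (v : Fin n) : 0 < per M v := by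
  unfold per
  split_ifs with h
  · exact (Nat.find_spec h).1
  · omega

lemma per_spec {M : Finset (Fin n × Fin n)} {v : Fin n} (h : onCyc M v) :
    iterN M (per M v) v = some v := by
  rw [per, dif_pos h]
  exact (Nat.find_spec h).2

lemma per_min {M : Finset (Fin n × Fin n)} {v : Fin n} (h : onCyc M v) {m : ℕ}
    (hm : 0 < m) (hlt : m < per M v) : iterN M m v ≠ some v := by
  rw [per, dif_pos h] at hlt
  intro hc
  exact Nat.find_min h hlt ⟨hm, hc⟩

noncomputable def cycList (M : Finset (Fin n × Fin n)) (v : Fin n) : List (Fin n) :=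
  trail M (per M v - 1) v

lemma cycList_length {M : Finset (Fin n × Fin n)} {v : Fin n} (h : onCyc M v) :
    (cycList M v).length = per M v - 1 := by
  have hpos := per_pos M v
  have hle := trail_length_le M (per M v - 1) v
  rw [cycList]
  rcases Nat.lt_or_ge (trail M (per M v - 1) v).length (per M v - 1) with hlt | hge
  · exfalso
    have h1 := trail_get? M (per M v - 1) v (trail M (per M v - 1) v).length hlt
    rw [List.getElem?_eq_none (le_refl _)] at h1
    obtain ⟨u, hu⟩ := iterN_some_of_le M
      (show (trail M (per M v - 1) v).length + 1 ≤ per M v by omega) (per_spec h)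
    rw [← h1] at hu
    simp at hu
  · exact le_antisymm hle hge

lemma cyc_some {M : Finset (Fin n × Fin n)} {v : Fin n} (h : onCyc M v) {a : ℕ}
    (ha : a ≤ per M v) : ∃ u, iterN M a v = some u :=
  iterN_some_of_le M ha (per_spec h)

lemma cyc_no_repeat {M : Finset (Fin n × Fin n)}
    (hR : ∀ e ∈ M, ∀ f ∈ M, e.2 = f.2 → e = f) {v : Fin n} (h : onCyc M v)
    {a b : ℕ} {w : Fin n} (hab : a < b) (hb : b < per M v)
    (h1 : iterN M a v = some w) (h2 : iterN M b v = some w) : False := by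
  obtain ⟨u, hu⟩ := cyc_some h (show b - a ≤ per M v by omega)
  have h3 : iterN M ((b - a) + a) v = iterN M b v := by rw [show (b-a)+a = b by omega]
  rw [iterN_add, hu, Option.bind_some, h2] at h3
  have : u = v := iterN_inj hR h3 h1
  subst this
  exact per_min h (by omega) (by omega) hu

lemma cyc_nodup {M : Finset (Fin n × Fin n)}
    (hR : ∀ e ∈ M, ∀ f ∈ M, e.2 = f.2 → e = f) {v : Fin n} (h : onCyc M v) :
    (v :: cycList M v).Nodup := by
  have hpos := per_pos M v
  have hlen : (cycList M v).length = per M v - 1 := cycList_length h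
  rw [List.nodup_iff_injective_get]
  rintro ⟨a, ha⟩ ⟨b, hb⟩ heq
  simp only [List.get_eq_getElem] at heq
  simp only [List.length_cons, hlen] at ha hb
  have key : ∀ c (hc : c < (v :: cycList M v).length),
      iterN M c v = some ((v :: cycList M v)[c]) := by
    intro c hc
    have hc' : c ≤ per M v - 1 := by simp only [List.length_cons, hlen] at hc; omega
    have := List.getElem?_eq_getElem hc
    rw [show (v :: cycList M v)[c]? = (v :: trail M (per M v - 1) v)[c]? from rfl,
      cons_trail_get? M (per M v - 1) v c hc'] at this
    exact this
  have h1 := key a (by simp only [List.length_cons, hlen]; omega)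
  have h2 := key b (by simp only [List.length_cons, hlen]; omega)
  rw [heq] at h1
  rcases lt_trichotomy a b with hlt | hlt | hlt
  · exact absurd (cyc_no_repeat hR h hlt (by omega) h1 h2) not_false
  · exact Fin.ext hlt
  · exact absurd (cyc_no_repeat hR h hlt (by omega) h2 h1) not_false

lemma iter_per_add {M : Finset (Fin n × Fin n)} {v : Fin n} (h : onCyc M v) (a : ℕ) :
    iterN M (per M v + a) v = iterN M a v := by
  rw [iterN_add, per_spec h, Option.bind_some]

lemma iter_add_mul_per {M : Finset (Fin n × Fin n)} {v : Fin n} (h : onCyc M v)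
    (b q : ℕ) : iterN M (b + q * per M v) v = iterN M b v := by
  induction q with
  | zero => simp
  | succ q ih =>
    have he : b + (q+1) * per M v = per M v + (b + q * per M v) := by ring
    rw [he, iter_per_add h, ih]

lemma iter_mod {M : Finset (Fin n × Fin n)} {v : Fin n} (h : onCyc M v) (a : ℕ) :
    iterN M a v = iterN M (a % per M v) v := by
  induction a using Nat.strong_induction_on with
  | _ a ih =>
    have hpos := per_pos M v
    rcases Nat.lt_or_ge a (per M v) with hlt | hge
    · rw [Nat.mod_eq_of_lt hlt]
    · have h1 : a = per M v + (a - per M v) := by omega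
      rw [h1, iter_per_add h, ih (a - per M v) (by omega), Nat.add_mod_left]

noncomputable def orbSet (M : Finset (Fin n × Fin n)) (v : Fin n) : Finset (Fin n) :=
  Finset.univ.filter fun w => ∃ a, iterN M a v = some w

lemma self_mem_orbSet (M : Finset (Fin n × Fin n)) (v : Fin n) : v ∈ orbSet M v := by
  simp only [orbSet, Finset.mem_filter, Finset.mem_univ, true_and]
  exact ⟨0, rfl⟩

lemma mem_orbSet {M : Finset (Fin n × Fin n)} {v w : Fin n} :
    w ∈ orbSet M v ↔ ∃ a, iterN M a v = some w := by
  simp [orbSet]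

noncomputable def orbMin (M : Finset (Fin n × Fin n)) (v : Fin n) : Fin n :=
  (orbSet M v).min' ⟨v, self_mem_orbSet M v⟩

lemma min'_congr {γ : Type*} [LinearOrder γ] {S T : Finset γ} (h : S = T)
    (hS : S.Nonempty) (hT : T.Nonempty) : S.min' hS = T.min' hT := by
  subst h; rfl

lemma onCyc_of_mem_orbSet {M : Finset (Fin n × Fin n)} {v w : Fin n} (h : onCyc M v)
    (hw : w ∈ orbSet M v) : onCyc M w := by
  obtain ⟨a, ha⟩ := mem_orbSet.mp hw
  refine ⟨per M v, per_pos M v, ?_⟩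
  have h1 : iterN M (a + per M v) v = (iterN M a v).bind (iterN M (per M v)) :=
    iterN_add M a (per M v) v
  rw [ha, Option.bind_some] at h1
  rw [← h1, Nat.add_comm, iter_per_add h, ha]

lemma orbSet_eq_of_mem {M : Finset (Fin n × Fin n)} {v w : Fin n} (h : onCyc M v)
    (hw : w ∈ orbSet M v) : orbSet M w = orbSet M v := by
  obtain ⟨a, ha⟩ := mem_orbSet.mp hw
  have hpos := per_pos M v
  apply Finset.ext
  intro u
  simp only [mem_orbSet]
  constructor
  · rintro ⟨b, hb⟩
    refine ⟨a + b, ?_⟩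
    rw [iterN_add, ha, Option.bind_some, hb]
  · rintro ⟨b, hb⟩
    refine ⟨b + a * (per M v - 1), ?_⟩
    have he : a + (b + a * (per M v - 1)) = b + a * per M v := by
      obtain ⟨c, hc⟩ := Nat.exists_eq_add_of_lt hpos
      rw [hc]
      rw [show 0 + c + 1 - 1 = c by omega, show 0 + c + 1 = c + 1 by omega, Nat.mul_succ]
      omega
    have key : iterN M (a + (b + a * (per M v - 1))) v = some u := by
      rw [he, iter_add_mul_per h, hb]
    have h2 := iterN_add M a (b + a * (per M v - 1)) v
    rw [ha, Option.bind_some] at h2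
    rw [← h2, key]

lemma mem_cycList_iff {M : Finset (Fin n × Fin n)} {v w : Fin n} (h : onCyc M v) :
    w ∈ v :: cycList M v ↔ w ∈ orbSet M v := by
  have hpos := per_pos M v
  constructor
  · intro hw
    rw [cycList, mem_cons_trail] at hw
    obtain ⟨a, _, ha⟩ := hw
    exact mem_orbSet.mpr ⟨a, ha⟩
  · intro hw
    obtain ⟨a, ha⟩ := mem_orbSet.mp hw
    rw [iter_mod h] at ha
    have hlt : a % per M v < per M v := Nat.mod_lt _ hpos
    rcases Nat.eq_zero_or_pos (a % per M v) with h0 | h0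
    · rw [h0] at ha
      obtain rfl := Option.some.inj ha
      exact List.mem_cons_self
    · exact List.mem_cons_of_mem _ (mem_trail_of_iter h0 (by omega) ha)

end MMD

namespace MMD

attribute [local instance] Classical.propDecidable

variable {n : ℕ}

lemma cons_trail_getElem (M : Finset (Fin n × Fin n)) (k : ℕ) (v : Fin n) :
    ∀ a (h : a < (v :: trail M k v).length),
      iterN M a v = some ((v :: trail M k v)[a]) := by
  intro a h
  have hlen := trail_length_le M k v
  simp only [List.length_cons] at h
  have := List.getElem?_eq_getElem (l := v :: trail M k v) (by simpa using h)
  rw [cons_trail_get? M k v a (by omega)] at this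
  exact this

lemma piter_iter {M : Finset (Fin n × Fin n)}
    (hL : ∀ e ∈ M, ∀ f ∈ M, e.1 = f.1 → e = f) {a : ℕ} :
    ∀ {v u : Fin n}, piterN M a v = some u → iterN M a u = some v := by
  induction a with
  | zero => intro v u h; obtain rfl := Option.some.inj h; rfl
  | succ a ih =>
    intro v u h
    simp only [piterN] at h
    cases h1 : piterN M a v with
    | none => rw [h1] at h; simp at h
    | some w =>
      rw [h1, Option.bind_some] at h
      have hm : (u, w) ∈ M := mprev_mem h
      rw [iterN_succ_left, mem_mnext hL hm, Option.bind_some]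
      exact ih h1

lemma spanning {M : Finset (Fin n × Fin n)}
    (hL : ∀ e ∈ M, ∀ f ∈ M, e.1 = f.1 → e = f)
    (hR : ∀ e ∈ M, ∀ f ∈ M, e.2 = f.2 → e = f) (v : Fin n) :
    (∃ r, RightUnmatched M r ∧ v ∈ r :: trail M n r) ∨ onCyc M v := by
  by_cases hA : ∃ k, k ≤ n ∧ piterN M k v = none
  · left
    obtain ⟨k1, hk1n, hk1⟩ := hA
    have hP : ∃ k, piterN M k v = none := ⟨k1, hk1⟩
    set k0 := Nat.find hP with hk0
    have hk0n : k0 ≤ n := le_trans (Nat.find_min' hP hk1) hk1n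
    have hspec : piterN M k0 v = none := Nat.find_spec hP
    have hk0pos : 0 < k0 := by
      rcases Nat.eq_zero_or_pos k0 with h0 | h0
      · rw [h0] at hspec; simp [piterN] at hspec
      · exact h0
    have hm1 : piterN M (k0 - 1) v ≠ none := Nat.find_min hP (by omega)
    obtain ⟨r, hr⟩ := Option.ne_none_iff_exists'.mp hm1
    have hprevr : mprev M r = none := by
      have : piterN M ((k0 - 1) + 1) v = none := by
        rw [show k0 - 1 + 1 = k0 by omega]; exact hspec
      simp only [piterN, hr, Option.bind_some] at this
      exact this
    have hru : RightUnmatched M r := by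
      intro e he h2
      have : ∃ j, (j, r) ∈ M := ⟨e.1, by rw [← h2]; exact he⟩
      rw [mprev, dif_pos this] at hprevr
      simp at hprevr
    refine ⟨r, hru, ?_⟩
    have hiter : iterN M (k0 - 1) r = some v := piter_iter hL hr
    rcases Nat.eq_zero_or_pos (k0 - 1) with h0 | h0
    · rw [h0] at hiter
      obtain rfl := Option.some.inj hiter
      exact List.mem_cons_self
    · exact List.mem_cons_of_mem _ (mem_trail_of_iter h0 (by omega) hiter)
  · right
    push_neg at hA
    have hf : ∀ k : Fin (n+1), ∃ u, piterN M (k : ℕ) v = some u := by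
      intro k
      exact Option.ne_none_iff_exists'.mp (hA k (Nat.le_of_lt_succ k.2))
    choose f hf' using hf
    obtain ⟨a, b, hne, heq⟩ := Fintype.exists_ne_map_eq_of_card_lt f (by simp)
    have key : ∀ (a b : Fin (n+1)), (a : ℕ) < (b : ℕ) → f a = f b → onCyc M v := by
      intro a b hab hfeq
      have ha := hf' a
      have hb := hf' b
      rw [hfeq] at ha
      set u := f b with hu
      have hia : iterN M (a : ℕ) u = some v := piter_iter hL ha
      have hib : iterN M (b : ℕ) u = some v := piter_iter hL hb
      obtain ⟨w, hw⟩ := iterN_some_of_le M (Nat.sub_le (b : ℕ) (a : ℕ)) hib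
      have h3 : iterN M (((b : ℕ) - (a : ℕ)) + (a : ℕ)) u = some v := by
        rwa [show (b : ℕ) - (a : ℕ) + (a : ℕ) = (b : ℕ) by omega]
      rw [iterN_add, hw, Option.bind_some] at h3
      obtain rfl : w = u := iterN_inj hR h3 hia
      have hwc : onCyc M u := ⟨(b : ℕ) - (a : ℕ), by omega, hw⟩
      exact onCyc_of_mem_orbSet hwc (mem_orbSet.mpr ⟨(a : ℕ), hia⟩)
    rcases lt_or_gt_of_ne hne with h | h
    · exact key a b h heq
    · exact key b a h heq.symm

lemma mem_zip_self {α : Type*} {R : α → α → Prop} :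
    ∀ (l : List α) (a : α), List.Chain R a l → ∀ p ∈ (a :: l).zip l, R p.1 p.2 := by
  intro l
  induction l with
  | nil => intro a _ p hp; simp [List.zip] at hp
  | cons c t ih =>
    intro a hch p hp
    rw [List.Chain, List.chain_cons] at hch
    rw [List.zip_cons_cons, List.mem_cons] at hp
    rcases hp with rfl | hp
    · exact hch.1
    · exact ih c hch.2 p hp

lemma mem_zip_snoc {α : Type*} {R : α → α → Prop} :
    ∀ (l : List α) (a b : α), List.Chain R a (l ++ [b]) →
      ∀ p ∈ (a :: l).zip (l ++ [b]), R p.1 p.2 := by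
  intro l
  induction l with
  | nil =>
    intro a b hch p hp
    simp only [List.nil_append, List.zip_cons_cons, List.zip_nil_left,
      List.mem_singleton] at hp
    subst hp
    rw [List.nil_append, List.Chain, List.chain_cons] at hch
    exact hch.1
  | cons c t ih =>
    intro a b hch p hp
    rw [List.cons_append, List.Chain, List.chain_cons] at hch
    rw [List.cons_append, List.zip_cons_cons, List.mem_cons] at hp
    rcases hp with rfl | hp
    · exact hch.1
    · exact ih c b hch.2 p hp

lemma chain_snoc {α : Type*} {R : α → α → Prop} :
    ∀ (l : List α) (a b : α), List.Chain R a l → R (stemTip a l) b →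
      List.Chain R a (l ++ [b]) := by
  intro l
  induction l with
  | nil => intro a b _ h2; simpa [stemTip] using List.Chain.cons h2 List.Chain.nil
  | cons c t ih =>
    intro a b hch htip
    rw [List.Chain, List.chain_cons] at hch
    refine List.Chain.cons hch.1 (ih c b hch.2 ?_)
    rwa [show stemTip a (c :: t) = stemTip c t by
      simp [stemTip, List.getLast_cons]] at htip

lemma getLast_getElem? {α : Type*} :
    ∀ (l : List α) (h : l ≠ []), l[l.length - 1]? = some (l.getLast h) := by
  intro l
  induction l with
  | nil => intro h; exact absurd rfl h
  | cons a t ih =>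
    intro h
    cases t with
    | nil => simp
    | cons b t2 =>
      rw [List.getLast_cons (by simp)]
      rw [show (a :: b :: t2).length - 1 = ((b :: t2).length - 1) + 1 by simp,
        List.getElem?_cons_succ]
      exact ih (by simp)

lemma cyc_tip_edge {M : Finset (Fin n × Fin n)} {v : Fin n} (h : onCyc M v) :
    (stemTip v (cycList M v), v) ∈ M := by
  have hpos := per_pos M v
  have hlen : (cycList M v).length = per M v - 1 := cycList_length h
  have hlc : (v :: cycList M v).length = per M v := by
    simp only [List.length_cons, hlen]; omega
  have h1 : (v :: cycList M v)[per M v - 1]? = iterN M (per M v - 1) v :=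
    cons_trail_get? M (per M v - 1) v (per M v - 1) (le_refl _)
  have h2 : (v :: cycList M v)[per M v - 1]? =
      some (stemTip v (cycList M v)) := by
    rw [show per M v - 1 = (v :: cycList M v).length - 1 by rw [hlc]]
    exact getLast_getElem? _ (List.cons_ne_nil _ _)
  have h3 : iterN M (per M v - 1) v = some (stemTip v (cycList M v)) := by
    rw [← h1, h2]
  have h4 : iterN M ((per M v - 1) + 1) v = some v := by
    rw [show per M v - 1 + 1 = per M v by omega]; exact per_spec h
  rw [iterN_add, h3, Option.bind_some, iterN_one] at h4
  exact mnext_mem h4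

end MMD

namespace MMD

attribute [local instance] Classical.propDecidable

variable {n : ℕ}

lemma stems_disj_aux {M : Finset (Fin n × Fin n)}
    (hR : ∀ e ∈ M, ∀ f ∈ M, e.2 = f.2 → e = f)
    {r1 r2 v : Fin n} {a b : ℕ} (h1 : RightUnmatched M r1) (hne : r1 ≠ r2)
    (hab : a ≤ b) (ha : iterN M a r1 = some v) (hb : iterN M b r2 = some v) : False := by
  obtain ⟨u, hu⟩ := iterN_some_of_le M (Nat.sub_le b a) hb
  have h3 : iterN M ((b - a) + a) r2 = some v := by
    rwa [show (b - a) + a = b by omega]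
  rw [iterN_add, hu, Option.bind_some] at h3
  obtain rfl : u = r1 := iterN_inj hR h3 ha
  rcases Nat.eq_zero_or_pos (b - a) with h0 | h0
  · rw [h0] at hu
    exact hne (Option.some.inj hu).symm
  · exact no_pred h1 h0 hu

lemma stems_disj {M : Finset (Fin n × Fin n)}
    (hR : ∀ e ∈ M, ∀ f ∈ M, e.2 = f.2 → e = f)
    {r1 r2 v : Fin n} {a b : ℕ} (h1 : RightUnmatched M r1) (h2 : RightUnmatched M r2)
    (hne : r1 ≠ r2) (ha : iterN M a r1 = some v) (hb : iterN M b r2 = some v) : False := by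
  rcases le_total a b with hab | hab
  · exact stems_disj_aux hR h1 hne hab ha hb
  · exact stems_disj_aux hR h2 (Ne.symm hne) hab hb ha

lemma stem_cyc_disj {M : Finset (Fin n × Fin n)}
    (hR : ∀ e ∈ M, ∀ f ∈ M, e.2 = f.2 → e = f)
    {r v : Fin n} {a : ℕ} (h1 : RightUnmatched M r)
    (ha : iterN M a r = some v) (hc : onCyc M v) : False := by
  have hpos := per_pos M v
  have h2 : iterN M (a + per M v) r = some v := by
    rw [iterN_add, ha, Option.bind_some]
    exact per_spec hc
  exact no_repeat hR h1 (by omega) ha h2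

lemma rep_piece {M : Finset (Fin n × Fin n)} {v : Fin n} (hc : onCyc M v) :
    ∃ w, onCyc M w ∧ orbMin M w = w ∧ v ∈ w :: cycList M w := by
  have hw : orbMin M v ∈ orbSet M v := Finset.min'_mem _ _
  set w := orbMin M v with hwdef
  have hwc := onCyc_of_mem_orbSet hc hw
  have heq : orbSet M w = orbSet M v := orbSet_eq_of_mem hc hw
  have hmin : orbMin M w = w := by
    rw [orbMin, min'_congr heq ⟨w, self_mem_orbSet M w⟩ ⟨v, self_mem_orbSet M v⟩]
    rfl
  have hv : v ∈ orbSet M w := heq ▸ self_mem_orbSet M v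
  exact ⟨w, hwc, hmin, (mem_cycList_iff hwc).mpr hv⟩

lemma rep_unique {M : Finset (Fin n × Fin n)} {w1 w2 v : Fin n}
    (h1 : onCyc M w1) (h2 : onCyc M w2) (hm1 : orbMin M w1 = w1) (hm2 : orbMin M w2 = w2)
    (hv1 : v ∈ orbSet M w1) (hv2 : v ∈ orbSet M w2) : w1 = w2 := by
  have e1 : orbSet M v = orbSet M w1 := orbSet_eq_of_mem h1 hv1
  have e2 : orbSet M v = orbSet M w2 := orbSet_eq_of_mem h2 hv2
  have : orbSet M w1 = orbSet M w2 := e1 ▸ e2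
  calc w1 = orbMin M w1 := hm1.symm
    _ = orbMin M w2 := by
        rw [orbMin, orbMin]
        exact min'_congr this _ _
    _ = w2 := hm2

lemma stem_edge_mem {M : Finset (Fin n × Fin n)}
    (hL : ∀ e ∈ M, ∀ f ∈ M, e.1 = f.1 → e = f)
    (hR : ∀ e ∈ M, ∀ f ∈ M, e.2 = f.2 → e = f)
    {r : Fin n} (h1 : RightUnmatched M r) {j i : Fin n} (he : (j, i) ∈ M)
    {a : ℕ} (han : a ≤ n) (ha : iterN M a r = some j) :
    (j, i) ∈ stemEdges r (trail M n r) := by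
  have hn : 0 < n := j.pos
  set l := trail M n r with hl
  have hnd : (r :: l).Nodup := stem_nodup hR h1 n
  have hcard : (r :: l).length ≤ n := by
    have := List.Nodup.length_le_card hnd
    simpa using this
  have hLn : l.length < n := by simp only [List.length_cons] at hcard; omega
  have hnext : mnext M j = some i := mem_mnext hL he
  have hsucc : iterN M (a + 1) r = some i := by
    rw [iterN_add, ha, Option.bind_some, iterN_one, hnext]
  have haL : a < l.length := by
    by_contra hcon
    push_neg at hcon
    -- a ≥ l.length; but a ≤ n and iterN (a+1) r is some, while iterN (l.length+1) r = none
    have h4 := trail_get? M n r l.length hLn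
    rw [List.getElem?_eq_none (le_refl _)] at h4
    obtain ⟨u, hu⟩ := iterN_some_of_le M (show l.length + 1 ≤ a + 1 by omega) hsucc
    rw [← h4] at hu
    simp at hu
  have hj : (r :: l)[a]'(by simp only [List.length_cons]; omega) = j := by
    have := cons_trail_getElem M n r a (by
      rw [show trail M n r = l from rfl]; simp only [List.length_cons]; omega)
    rw [ha] at this
    exact (Option.some.inj this).symm
  have hi : l[a]'haL = i := by
    have h5 := trail_get? M n r a (by omega)
    rw [List.getElem?_eq_getElem haL, hsucc] at h5
    exact Option.some.inj h5
  have hzlen : a < ((r :: l).zip l).length := by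
    rw [List.length_zip]
    simp only [List.length_cons]
    omega
  have hz : ((r :: l).zip l)[a]'hzlen = (j, i) := by
    rw [List.getElem_zip, hj, hi]
  rw [stemEdges, ← hz]
  exact List.getElem_mem _

lemma cyc_edge_mem {M : Finset (Fin n × Fin n)}
    (hL : ∀ e ∈ M, ∀ f ∈ M, e.1 = f.1 → e = f)
    {v : Fin n} (hc : onCyc M v) {j i : Fin n} (he : (j, i) ∈ M)
    (hj : j ∈ orbSet M v) : (j, i) ∈ cycleEdges v (cycList M v) := by
  have hpos := per_pos M v
  set m := per M v with hm
  set l := cycList M v with hl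
  have hlen : l.length = m - 1 := cycList_length hc
  obtain ⟨a0, ha0⟩ := mem_orbSet.mp hj
  rw [iter_mod hc] at ha0
  set a := a0 % m with ha
  have ham : a < m := Nat.mod_lt _ hpos
  have hnext : mnext M j = some i := mem_mnext hL he
  have hsucc : iterN M (a + 1) v = some i := by
    rw [iterN_add, ha0, Option.bind_some, iterN_one, hnext]
  have hj' : (v :: l)[a]'(by simp only [List.length_cons, hlen]; omega) = j := by
    have := cons_trail_getElem M (m - 1) v a (by
      rw [show trail M (m - 1) v = l from rfl]
      simp only [List.length_cons, hlen]; omega)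
    rw [ha0] at this
    exact (Option.some.inj this).symm
  have hi : (l ++ [v])[a]'(by simp [hlen]; omega) = i := by
    rcases Nat.lt_or_ge a (m - 1) with hlt | hge
    · rw [List.getElem_append_left (by omega)]
      have h5 := trail_get? M (m - 1) v a (by omega)
      rw [List.getElem?_eq_getElem (by
        rw [show trail M (m - 1) v = l from rfl, hlen]; omega), hsucc] at h5
      exact Option.some.inj h5
    · have haeq : a = m - 1 := by omega
      rw [List.getElem_append_right (by omega)]
      have : iterN M m v = some i := by
        rw [show m = a + 1 by omega]; exact hsucc
      rw [per_spec hc] at this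
      obtain rfl := Option.some.inj this
      simp [hlen, haeq]
  have hzlen : a < ((v :: l).zip (l ++ [v])).length := by
    rw [List.length_zip]
    simp [hlen]
    omega
  have hz : ((v :: l).zip (l ++ [v]))[a]'hzlen = (j, i) := by
    rw [List.getElem_zip, hj', hi]
  rw [cycleEdges, ← hz]
  exact List.getElem_mem _

end MMD

open MMD

/-- If a maximum matching `M*` of `B(X, X, E)` has a nonempty set of
right-unmatched vertices, then its edges (viewed in `D(Ā)`), together with the isolated
vertices, form a spanning, vertex-disjoint union of directed cycles and state stems,
the roots of the state stems being exactly the right-unmatched vertices of `M*`. -/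
theorem maximum_matching_decomposition
    {n : ℕ} (Ab : Matrix (Fin n) (Fin n) Bool) (M : Finset (Fin n × Fin n))
    (hM : IsMaxMatching (stateEdgeFinset Ab) M)
    (hne : ∃ v : Fin n, RightUnmatched M v) :
    ∃ Stems Cycles : Finset (Fin n × List (Fin n)),
      (∀ s ∈ Stems, IsStem (stateEdge Ab) s.1 s.2) ∧
      (∀ c ∈ Cycles, IsCycle (stateEdge Ab) c.1 c.2) ∧
      Disjoint Stems Cycles ∧
      (∀ s ∈ Stems ∪ Cycles, ∀ t ∈ Stems ∪ Cycles, s ≠ t →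
        ∀ v, v ∈ pieceVerts s → v ∉ pieceVerts t) ∧
      (∀ v : Fin n, ∃ s ∈ Stems ∪ Cycles, v ∈ pieceVerts s) ∧
      (∀ e : Fin n × Fin n, e ∈ M ↔
        (∃ s ∈ Stems, e ∈ stemEdges s.1 s.2) ∨ ∃ c ∈ Cycles, e ∈ cycleEdges c.1 c.2) ∧
      (∀ v : Fin n, (∃ s ∈ Stems, s.1 = v) ↔ RightUnmatched M v) := by
  classical
  obtain ⟨⟨hME, hL, hR⟩, -⟩ := hM
  have edgeState : ∀ {a b : Fin n}, (a, b) ∈ M → stateEdge Ab a b := by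
    intro a b h
    exact (Finset.mem_filter.mp (hME h)).2
  refine ⟨(Finset.univ.filter fun r => RightUnmatched M r).image
      (fun r => (r, trail M n r)),
    (Finset.univ.filter fun v => onCyc M v ∧ orbMin M v = v).image
      (fun v => (v, cycList M v)), ?_, ?_, ?_, ?_, ?_, ?_, ?_⟩
  · -- stems are stems
    intro s hs
    obtain ⟨r, hr, rfl⟩ := Finset.mem_image.mp hs
    have hru : RightUnmatched M r := (Finset.mem_filter.mp hr).2
    exact ⟨stem_nodup hR hru n,
      List.IsChain.imp (fun a b h => edgeState h) (trail_chain M n r)⟩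
  · -- cycles are cycles
    intro c hc
    obtain ⟨v, hv, rfl⟩ := Finset.mem_image.mp hc
    have hvc : onCyc M v := (Finset.mem_filter.mp hv).2.1
    exact ⟨⟨cyc_nodup hR hvc,
      List.IsChain.imp (fun a b h => edgeState h) (trail_chain M (per M v - 1) v)⟩,
      edgeState (cyc_tip_edge hvc)⟩
  · -- disjoint
    rw [Finset.disjoint_left]
    intro p hp hq
    obtain ⟨r, hr, rfl⟩ := Finset.mem_image.mp hp
    have hru : RightUnmatched M r := (Finset.mem_filter.mp hr).2
    obtain ⟨v, hv, heq⟩ := Finset.mem_image.mp hq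
    have hvc : onCyc M v := (Finset.mem_filter.mp hv).2.1
    obtain ⟨rfl, -⟩ := Prod.mk.injEq .. ▸ heq
    exact no_pred hru (per_pos M v) (per_spec hvc)
  · -- vertex disjointness
    intro s hs t ht hst v hvs hvt
    rcases Finset.mem_union.mp hs with hs' | hs' <;>
      rcases Finset.mem_union.mp ht with ht' | ht'
    · obtain ⟨r1, hr1, rfl⟩ := Finset.mem_image.mp hs'
      obtain ⟨r2, hr2, rfl⟩ := Finset.mem_image.mp ht'
      have h1 : RightUnmatched M r1 := (Finset.mem_filter.mp hr1).2
      have h2 : RightUnmatched M r2 := (Finset.mem_filter.mp hr2).2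
      have hne12 : r1 ≠ r2 := fun h => hst (by rw [h])
      obtain ⟨a, -, ha⟩ := mem_cons_trail.mp hvs
      obtain ⟨b, -, hb⟩ := mem_cons_trail.mp hvt
      exact stems_disj hR h1 h2 hne12 ha hb
    · obtain ⟨r1, hr1, rfl⟩ := Finset.mem_image.mp hs'
      obtain ⟨w, hw, rfl⟩ := Finset.mem_image.mp ht'
      have h1 : RightUnmatched M r1 := (Finset.mem_filter.mp hr1).2
      have hwc : onCyc M w := (Finset.mem_filter.mp hw).2.1
      obtain ⟨a, -, ha⟩ := mem_cons_trail.mp hvs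
      have hvo : v ∈ orbSet M w := (mem_cycList_iff hwc).mp hvt
      exact stem_cyc_disj hR h1 ha (onCyc_of_mem_orbSet hwc hvo)
    · obtain ⟨w, hw, rfl⟩ := Finset.mem_image.mp hs'
      obtain ⟨r1, hr1, rfl⟩ := Finset.mem_image.mp ht'
      have h1 : RightUnmatched M r1 := (Finset.mem_filter.mp hr1).2
      have hwc : onCyc M w := (Finset.mem_filter.mp hw).2.1
      obtain ⟨a, -, ha⟩ := mem_cons_trail.mp hvt
      have hvo : v ∈ orbSet M w := (mem_cycList_iff hwc).mp hvs
      exact stem_cyc_disj hR h1 ha (onCyc_of_mem_orbSet hwc hvo)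
    · obtain ⟨w1, hw1, rfl⟩ := Finset.mem_image.mp hs'
      obtain ⟨w2, hw2, rfl⟩ := Finset.mem_image.mp ht'
      have h1 : onCyc M w1 := (Finset.mem_filter.mp hw1).2.1
      have h2 : onCyc M w2 := (Finset.mem_filter.mp hw2).2.1
      have hm1 : orbMin M w1 = w1 := (Finset.mem_filter.mp hw1).2.2
      have hm2 : orbMin M w2 = w2 := (Finset.mem_filter.mp hw2).2.2
      have hv1 : v ∈ orbSet M w1 := (mem_cycList_iff h1).mp hvs
      have hv2 : v ∈ orbSet M w2 := (mem_cycList_iff h2).mp hvt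
      exact hst (by rw [rep_unique h1 h2 hm1 hm2 hv1 hv2])
  · -- spanning
    intro v
    rcases spanning hL hR v with ⟨r, hr, hmem⟩ | hc
    · refine ⟨(r, trail M n r), Finset.mem_union_left _ ?_, hmem⟩
      exact Finset.mem_image.mpr ⟨r, Finset.mem_filter.mpr ⟨Finset.mem_univ _, hr⟩, rfl⟩
    · obtain ⟨w, hwc, hwm, hmem⟩ := rep_piece hc
      refine ⟨(w, cycList M w), Finset.mem_union_right _ ?_, hmem⟩
      exact Finset.mem_image.mpr ⟨w, Finset.mem_filter.mpr ⟨Finset.mem_univ _, hwc, hwm⟩, rfl⟩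
  · -- edges
    intro e
    constructor
    · intro he
      obtain ⟨j, i⟩ := e
      rcases spanning hL hR j with ⟨r, hr, hmem⟩ | hc
      · obtain ⟨a, han, ha⟩ := mem_cons_trail.mp hmem
        exact Or.inl ⟨(r, trail M n r),
          Finset.mem_image.mpr ⟨r, Finset.mem_filter.mpr ⟨Finset.mem_univ _, hr⟩, rfl⟩,
          stem_edge_mem hL hR hr he han ha⟩
      · obtain ⟨w, hwc, hwm, hmem⟩ := rep_piece hc
        have hjo : j ∈ orbSet M w := (mem_cycList_iff hwc).mp hmem
        exact Or.inr ⟨(w, cycList M w),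
          Finset.mem_image.mpr ⟨w, Finset.mem_filter.mpr ⟨Finset.mem_univ _, hwc, hwm⟩, rfl⟩,
          cyc_edge_mem hL hwc he hjo⟩
    · rintro (⟨s, hs, hes⟩ | ⟨c, hc, hec⟩)
      · obtain ⟨r, hr, rfl⟩ := Finset.mem_image.mp hs
        have := mem_zip_self (trail M n r) r (trail_chain M n r) e hes
        rwa [← Prod.mk.eta (p := e)]
      · obtain ⟨w, hw, rfl⟩ := Finset.mem_image.mp hc
        have hwc : onCyc M w := (Finset.mem_filter.mp hw).2.1
        have hch : List.Chain (fun a b => (a, b) ∈ M) w (cycList M w ++ [w]) :=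
          chain_snoc (cycList M w) w w (trail_chain M (per M w - 1) w) (cyc_tip_edge hwc)
        have := mem_zip_snoc (cycList M w) w w hch e hec
        rwa [← Prod.mk.eta (p := e)]
  · -- roots
    intro v
    constructor
    · rintro ⟨s, hs, hs1⟩
      obtain ⟨r, hr, rfl⟩ := Finset.mem_image.mp hs
      obtain rfl : r = v := hs1
      exact (Finset.mem_filter.mp hr).2
    · intro hv
      exact ⟨(v, trail M n v),
        Finset.mem_image.mpr ⟨v, Finset.mem_filter.mpr ⟨Finset.mem_univ _, hv⟩, rfl⟩, rfl⟩
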